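/- For all integers a ≥ 1, c ≥ 0 and j ≥ 0, the graph G^4_{a,c,j} has a+c+j+4 vertices and its matching number equals 2 + ⌊(j+1)/2⌋. -/

import Mathlib

open SimpleGraph Finset

/-- The Wiener index of a graph: the sum of distances over all unordered pairs
of distinct vertices (computed as half the sum over ordered pairs). -/
noncomputable def wienerIndex {V : Type*} [Fintype V] (G : SimpleGraph V) : ℕ :=
  (∑ u : V, ∑ v : V, G.dist u v) / 2

/-- The matching number of a graph: maximum number of edges of a matching. -/
noncomputable def matchingNumber {V : Type*} [Fintype V] (G : SimpleGraph V) : ℕ :=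
  sSup {k : ℕ | ∃ M : G.Subgraph, M.IsMatching ∧ M.edgeSet.ncard = k}

/-- A graph is unicyclic if it is connected and has as many edges as vertices. -/
def IsUnicyclic {V : Type*} [Fintype V] (G : SimpleGraph V) : Prop :=
  G.Connected ∧ G.edgeSet.ncard = Fintype.card V

/-- `G3Graph a j` : a triangle on vertices `0,1,2`, a path with `j` edges attached to
vertex `2` (vertices `2,3,…,j+2`), and `a` pendant vertices attached to vertex `j+2`. -/
def G3Graph (a j : ℕ) : SimpleGraph (Fin (a + j + 3)) :=
  SimpleGraph.fromRel (fun u v =>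
    (u.val = 0 ∧ v.val = 1) ∨ (u.val = 0 ∧ v.val = 2) ∨ (u.val = 1 ∧ v.val = 2) ∨
    (2 ≤ u.val ∧ u.val ≤ j + 1 ∧ v.val = u.val + 1) ∨
    (u.val = j + 2 ∧ j + 3 ≤ v.val))

/-- `G3Graph4 a b c j` : a triangle on vertices `0,1,2`, a path with `j` edges attached to
vertex `2` ending in a star with `a` leaves, `b` pendant vertices attached to vertex `0`,
and `c` pendant vertices attached to vertex `1`. -/
def G3Graph4 (a b c j : ℕ) : SimpleGraph (Fin (a + b + c + j + 3)) :=
  SimpleGraph.fromRel (fun u v =>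
    (u.val = 0 ∧ v.val = 1) ∨ (u.val = 0 ∧ v.val = 2) ∨ (u.val = 1 ∧ v.val = 2) ∨
    (2 ≤ u.val ∧ u.val ≤ j + 1 ∧ v.val = u.val + 1) ∨
    (u.val = j + 2 ∧ j + 3 ≤ v.val ∧ v.val < j + 3 + a) ∨
    (u.val = 0 ∧ j + 3 + a ≤ v.val ∧ v.val < j + 3 + a + b) ∨
    (u.val = 1 ∧ j + 3 + a + b ≤ v.val))

/-- `G4Graph a c j` : a 4-cycle on vertices `0,1,2,3`, a path with `j` edges attached to
vertex `3` (vertices `3,4,…,j+3`), `a` pendant vertices attached to the far endpoint `j+3`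
of the path, and `c` pendant vertices attached to vertex `1` (opposite to `3`). -/
def G4Graph (a c j : ℕ) : SimpleGraph (Fin (a + c + j + 4)) :=
  SimpleGraph.fromRel (fun u v =>
    (u.val = 0 ∧ v.val = 1) ∨ (u.val = 1 ∧ v.val = 2) ∨ (u.val = 2 ∧ v.val = 3) ∨
    (u.val = 0 ∧ v.val = 3) ∨
    (3 ≤ u.val ∧ u.val ≤ j + 2 ∧ v.val = u.val + 1) ∨
    (u.val = j + 3 ∧ j + 4 ≤ v.val ∧ v.val < j + 4 + a) ∨
    (u.val = 1 ∧ j + 4 + a ≤ v.val))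

lemma step_rel (a c j x y : ℕ) (ha : 1 ≤ a) (hy : y = x + 1) (hx2 : x % 2 = 0)
    (hxb : y < 2 * ((j + 1) / 2) + 4) :
    (x = 0 ∧ y = 1) ∨ (x = 1 ∧ y = 2) ∨ (x = 2 ∧ y = 3) ∨
    (x = 0 ∧ y = 3) ∨
    (3 ≤ x ∧ x ≤ j + 2 ∧ y = x + 1) ∨
    (x = j + 3 ∧ j + 4 ≤ y ∧ y < j + 4 + a) ∨
    (x = 1 ∧ j + 4 + a ≤ y) := by
  have hcase : x = 0 ∨ x = 2 ∨ (3 ≤ x ∧ x ≤ j + 2) ∨ x = j + 3 := by omega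
  rcases hcase with h | h | h | h
  · exact Or.inl ⟨h, by omega⟩
  · exact Or.inr (Or.inr (Or.inl ⟨h, by omega⟩))
  · exact Or.inr (Or.inr (Or.inr (Or.inr (Or.inl ⟨h.1, h.2, hy⟩))))
  · exact Or.inr (Or.inr (Or.inr (Or.inr (Or.inr (Or.inl ⟨h, by omega, by omega⟩)))))

def myM (a c j : ℕ) (ha : 1 ≤ a) : (G4Graph a c j).Subgraph where
  verts := {v | v.val < 2 * ((j + 1) / 2) + 4}
  Adj u v := u.val < 2 * ((j + 1) / 2) + 4 ∧ v.val < 2 * ((j + 1) / 2) + 4 ∧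
    u.val / 2 = v.val / 2 ∧ u ≠ v
  adj_sub := by
    rintro u v ⟨hu, hv, hdiv, hne⟩
    have hne' : u.val ≠ v.val := fun h => hne (Fin.val_injective h)
    rw [G4Graph, fromRel_adj]
    refine ⟨hne, ?_⟩
    have hpar : (v.val = u.val + 1 ∧ u.val % 2 = 0) ∨
        (u.val = v.val + 1 ∧ v.val % 2 = 0) := by omega
    rcases hpar with ⟨h1, h2⟩ | ⟨h1, h2⟩
    · exact Or.inl (step_rel a c j u.val v.val ha h1 h2 hv)
    · exact Or.inr (step_rel a c j v.val u.val ha h1 h2 hu)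
  edge_vert := by
    rintro u v ⟨hu, _, _, _⟩
    exact hu
  symm := by
    constructor
    rintro u v ⟨h1, h2, h3, h4⟩
    exact ⟨h2, h1, h3.symm, h4.symm⟩

lemma myM_isMatching (a c j : ℕ) (ha : 1 ≤ a) : (myM a c j ha).IsMatching := by
  intro v hv
  have hv' : v.val < 2 * ((j + 1) / 2) + 4 := hv
  have hvn := v.isLt
  refine ⟨⟨2 * (v.val / 2) + (1 - v.val % 2), by omega⟩,
    ⟨hv', by simp only; omega, by simp only; omega, Fin.ne_of_val_ne (by simp only; omega)⟩, ?_⟩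
  rintro w ⟨hw1, hw2, hw3, hw4⟩
  have hne' : v.val ≠ w.val := fun h => hw4 (Fin.val_injective h)
  apply Fin.val_injective
  simp only
  omega

lemma myM_card (a c j : ℕ) (ha : 1 ≤ a) :
    (myM a c j ha).edgeSet.ncard = (j + 1) / 2 + 2 := by
  have hb1 : ∀ i : Fin ((j + 1) / 2 + 2), 2 * i.val < a + c + j + 4 := by
    intro i; have := i.isLt; omega
  have hb2 : ∀ i : Fin ((j + 1) / 2 + 2), 2 * i.val + 1 < a + c + j + 4 := by
    intro i; have := i.isLt; omega
  set f : Fin ((j + 1) / 2 + 2) → Sym2 (Fin (a + c + j + 4)) :=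
    fun i => s(⟨2 * i.val, hb1 i⟩, ⟨2 * i.val + 1, hb2 i⟩) with hf
  have hrange : (myM a c j ha).edgeSet = Set.range f := by
    ext e
    induction e using Sym2.ind with
    | _ u v =>
      rw [SimpleGraph.Subgraph.mem_edgeSet]
      constructor
      · rintro ⟨hu, hv, hdiv, hne⟩
        have hne' : u.val ≠ v.val := fun h => hne (Fin.val_injective h)
        refine ⟨⟨u.val / 2, by omega⟩, ?_⟩
        simp only [hf]
        rw [Sym2.eq_iff]
        rcases Nat.lt_or_ge u.val v.val with h | h
        · left
          constructor <;> apply Fin.val_injective <;> simp only <;> omega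
        · right
          constructor <;> apply Fin.val_injective <;> simp only <;> omega
      · rintro ⟨i, hi⟩
        have hil := i.isLt
        simp only [hf] at hi
        rw [Sym2.eq_iff] at hi
        have key : ∀ x y : Fin (a + c + j + 4), x.val = 2 * i.val → y.val = 2 * i.val + 1 →
            (myM a c j ha).Adj x y := by
          intro x y hx hy
          exact ⟨by omega, by omega, by omega, Fin.ne_of_val_ne (by omega)⟩
        rcases hi with ⟨h1, h2⟩ | ⟨h1, h2⟩
        · exact key u v (congrArg Fin.val h1.symm) (congrArg Fin.val h2.symm)
        · exact ((key v u (congrArg Fin.val h1.symm) (congrArg Fin.val h2.symm)).symm)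
  rw [hrange]
  have hinj : Function.Injective f := by
    intro i i' h
    simp only [hf, Sym2.eq_iff] at h
    apply Fin.val_injective
    rcases h with ⟨h1, h2⟩ | ⟨h1, h2⟩ <;>
      · have e1 := congrArg Fin.val h1
        have e2 := congrArg Fin.val h2
        simp only at e1 e2
        omega
  rw [← Set.image_univ, Set.ncard_image_of_injOn hinj.injOn, Set.ncard_univ]
  simp

lemma cover_bound (a c j : ℕ) (ha : 1 ≤ a) (M : (G4Graph a c j).Subgraph)
    (hM : M.IsMatching) : M.edgeSet.ncard ≤ (j + 1) / 2 + 2 := by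
  set C : Set (Fin (a + c + j + 4)) := {x | x.val = 1 ∨ x.val = 3 ∨
    (4 ≤ x.val ∧ x.val ≤ j + 3 ∧ (j + 3 - x.val) % 2 = 0)} with hC
  have hcover : ∀ u v : Fin (a + c + j + 4), (G4Graph a c j).Adj u v → u ∈ C ∨ v ∈ C := by
    intro u v huv
    rw [G4Graph, fromRel_adj] at huv
    obtain ⟨hne, h⟩ := huv
    simp only [hC, Set.mem_setOf_eq]
    omega
  set g : Fin (a + c + j + 4) → ℕ := fun x =>
    if x.val = 1 then 0 else if x.val = 3 then 1 else (j + 3 - x.val) / 2 + 2 with hg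
  have hglt : ∀ x ∈ C, g x < (j + 1) / 2 + 2 := by
    intro x hx
    simp only [hC, Set.mem_setOf_eq] at hx
    simp only [hg]
    split_ifs <;> omega
  have hginj : Set.InjOn g C := by
    intro x hx y hy hxy
    simp only [hC, Set.mem_setOf_eq] at hx hy
    simp only [hg] at hxy
    apply Fin.val_injective
    split_ifs at hxy <;> omega
  have hchoice : ∀ e : Sym2 (Fin (a + c + j + 4)), ∃ x : Fin (a + c + j + 4),
      e ∈ M.edgeSet → x ∈ e ∧ x ∈ C := by
    intro e
    induction e using Sym2.ind with
    | _ u v =>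
      by_cases he : s(u, v) ∈ M.edgeSet
      · rw [SimpleGraph.Subgraph.mem_edgeSet] at he
        rcases hcover u v (M.adj_sub he) with h | h
        · exact ⟨u, fun _ => ⟨Sym2.mem_mk_left u v, h⟩⟩
        · exact ⟨v, fun _ => ⟨Sym2.mem_mk_right u v, h⟩⟩
      · exact ⟨⟨0, by omega⟩, fun h => absurd h he⟩
  choose φ hφ using hchoice
  have hinj : Set.InjOn (g ∘ φ) M.edgeSet := by
    intro e1 he1 e2 he2 heq
    obtain ⟨hm1, hc1⟩ := hφ e1 he1
    obtain ⟨hm2, hc2⟩ := hφ e2 he2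
    have hxeq : φ e1 = φ e2 := hginj hc1 hc2 heq
    rw [← hxeq] at hm2
    obtain ⟨y, hy⟩ := Sym2.mem_iff_exists.mp hm1
    obtain ⟨z, hz⟩ := Sym2.mem_iff_exists.mp hm2
    rw [hy, SimpleGraph.Subgraph.mem_edgeSet] at he1
    rw [hz, SimpleGraph.Subgraph.mem_edgeSet] at he2
    have hxv : φ e1 ∈ M.verts := M.edge_vert he1
    obtain ⟨w, _, huniq⟩ := hM hxv
    rw [hy, hz, huniq y he1, huniq z he2]
  have himg : (g ∘ φ) '' M.edgeSet ⊆ ↑(Finset.range ((j + 1) / 2 + 2)) := by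
    rintro k ⟨e, he, rfl⟩
    simp only [Finset.coe_range, Set.mem_Iio, Function.comp_apply]
    exact hglt _ (hφ e he).2
  calc M.edgeSet.ncard = ((g ∘ φ) '' M.edgeSet).ncard :=
        (Set.ncard_image_of_injOn hinj).symm
    _ ≤ (↑(Finset.range ((j + 1) / 2 + 2)) : Set ℕ).ncard :=
        Set.ncard_le_ncard himg (Finset.range _).finite_toSet
    _ = (j + 1) / 2 + 2 := by rw [Set.ncard_coe_finset, Finset.card_range]

theorem stmt9 (a c j : ℕ) (ha : 1 ≤ a) :
    Fintype.card (Fin (a + c + j + 4)) = a + c + j + 4 ∧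
    matchingNumber (G4Graph a c j) = 2 + (j + 1) / 2 := by
  refine ⟨Fintype.card_fin _, ?_⟩
  have hmem : ((j + 1) / 2 + 2) ∈
      {k : ℕ | ∃ M : (G4Graph a c j).Subgraph, M.IsMatching ∧ M.edgeSet.ncard = k} :=
    ⟨myM a c j ha, myM_isMatching a c j ha, myM_card a c j ha⟩
  have hub : ∀ b ∈ {k : ℕ | ∃ M : (G4Graph a c j).Subgraph, M.IsMatching ∧
      M.edgeSet.ncard = k}, b ≤ (j + 1) / 2 + 2 := by
    rintro b ⟨M, hM, rfl⟩
    exact cover_bound a c j ha M hM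
  have : matchingNumber (G4Graph a c j) = (j + 1) / 2 + 2 := by
    rw [matchingNumber]
    exact le_antisymm (csSup_le ⟨_, hmem⟩ hub) (le_csSup ⟨_, hub⟩ hmem)
  omega
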